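/- arXiv:1202.5977 — 5 statements merged into one kernel-verified Lean document; each statement's English description precedes it below -/
import Mathlib

section
/- Let S be a left cancellative monoid. S satisfies Clifford's condition (for all s, t ∈ S, either sS ∩ tS = ∅ or sS ∩ tS = rS for some r) if and only if for every s, t ∈ S with the set t⁻¹(sS) = {u : t*u ∈ sS} nonempty, there exists r ∈ S with t⁻¹(sS) = rS. -/
/-- A left cancellative monoid satisfies Clifford's condition iff every nonempty
set `t⁻¹(sS)` is a principal right ideal. -/
theorem stmt5 {S : Type*} [Monoid S] (hc : ∀ a b c : S, a * b = a * c → b = c) :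
    (∀ s t : S, Set.range (s * ·) ∩ Set.range (t * ·) = ∅ ∨
        ∃ r : S, Set.range (s * ·) ∩ Set.range (t * ·) = Set.range (r * ·)) ↔
      (∀ s t : S, {u : S | t * u ∈ Set.range (s * ·)}.Nonempty →
        ∃ r : S, {u : S | t * u ∈ Set.range (s * ·)} = Set.range (r * ·)) := by
  constructor
  · intro H s t ⟨u, x, hx⟩
    rcases H s t with h | ⟨r, hr⟩
    · exact absurd (Set.eq_empty_iff_forall_notMem.mp h (t * u) ⟨⟨x, hx⟩, ⟨u, rfl⟩⟩) id
    · have hrmem : r ∈ Set.range (s * ·) ∩ Set.range (t * ·) := by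
        rw [hr]; exact ⟨1, by simp⟩
      obtain ⟨⟨a, ha⟩, ⟨r', hr'⟩⟩ := hrmem
      have hr'' : t * r' = r := hr'
      refine ⟨r', Set.ext fun u => ?_⟩
      constructor
      · intro hu
        have : t * u ∈ Set.range (r * ·) := by
          rw [← hr]; exact ⟨hu, ⟨u, rfl⟩⟩
        obtain ⟨v, hv⟩ := this
        have hv' : r * v = t * u := hv
        refine ⟨v, hc t _ _ ?_⟩
        show t * (r' * v) = t * u
        rw [← hv', ← hr'', mul_assoc]
      · rintro ⟨v, hv⟩
        have hv' : r' * v = u := hv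
        have hm : r * v ∈ Set.range (s * ·) ∩ Set.range (t * ·) := by
          rw [hr]; exact ⟨v, rfl⟩
        show t * u ∈ Set.range (s * ·)
        rw [← hv', ← mul_assoc, hr'']
        exact hm.1
  · intro H s t
    by_cases h : (Set.range (s * ·) ∩ Set.range (t * ·)) = ∅
    · exact Or.inl h
    · right
      obtain ⟨x, ⟨a, ha⟩, ⟨b, hb⟩⟩ := Set.nonempty_iff_ne_empty.mpr h
      have ha' : s * a = x := ha
      have hb' : t * b = x := hb
      obtain ⟨r', hr'⟩ := H s t ⟨b, ⟨a, by show s * a = t * b; rw [ha', hb']⟩⟩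
      refine ⟨t * r', Set.ext fun y => ?_⟩
      constructor
      · rintro ⟨⟨c, hc'⟩, ⟨u, hu⟩⟩
        have hu' : t * u = y := hu
        have hc'' : s * c = y := hc'
        have : u ∈ Set.range (r' * ·) := by
          rw [← hr']; show t * u ∈ Set.range (s * ·); rw [hu']; exact ⟨c, hc''⟩
        obtain ⟨v, hv⟩ := this
        have hv' : r' * v = u := hv
        exact ⟨v, by show t * r' * v = y; rw [mul_assoc, hv', hu']⟩
      · rintro ⟨v, hv⟩
        have hv' : t * r' * v = y := hv
        have h1 : r' * v ∈ {u : S | t * u ∈ Set.range (s * ·)} := by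
          rw [hr']; exact ⟨v, rfl⟩
        have h2 : t * (r' * v) ∈ Set.range (s * ·) := h1
        rw [← mul_assoc, hv'] at h2
        exact ⟨h2, ⟨r' * v, by show t * (r' * v) = y; rw [← mul_assoc, hv']⟩⟩
end

section
/- Let S be an algebraically ordered left cancellative monoid. Then S satisfies Clifford's condition if and only if every pair of elements of S that has a common lower bound (in the algebraic order) has a greatest lower bound. -/
/-- An algebraically ordered left cancellative monoid satisfies Clifford's condition
iff every pair of elements with a common lower bound has a greatest lower bound. -/
theorem stmt6 {S : Type*} [Monoid S] (hc : ∀ a b c : S, a * b = a * c → b = c)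
    (hanti : ∀ s t : S, s ∈ Set.range (t * ·) → t ∈ Set.range (s * ·) → s = t) :
    (∀ s t : S, Set.range (s * ·) ∩ Set.range (t * ·) = ∅ ∨
        ∃ r : S, Set.range (s * ·) ∩ Set.range (t * ·) = Set.range (r * ·)) ↔
      (∀ s t : S, (∃ u : S, u ∈ Set.range (s * ·) ∧ u ∈ Set.range (t * ·)) →
        ∃ w : S, w ∈ Set.range (s * ·) ∧ w ∈ Set.range (t * ·) ∧
          ∀ u : S, u ∈ Set.range (s * ·) → u ∈ Set.range (t * ·) →
            u ∈ Set.range (w * ·)) := by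
  constructor
  · intro h s t ⟨u, hus, hut⟩
    rcases h s t with he | ⟨r, hr⟩
    · exact absurd (he ▸ ⟨hus, hut⟩ : u ∈ (∅ : Set S)) (Set.notMem_empty u)
    · have hrmem : r ∈ Set.range (s * ·) ∩ Set.range (t * ·) := hr ▸ ⟨1, mul_one r⟩
      exact ⟨r, hrmem.1, hrmem.2, fun u hs ht => hr ▸ Set.mem_inter hs ht⟩
  · intro h s t
    by_cases hne : ∃ u : S, u ∈ Set.range (s * ·) ∧ u ∈ Set.range (t * ·)
    · obtain ⟨w, ⟨a, ha⟩, ⟨b, hb⟩, hg⟩ := h s t hne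
      right
      refine ⟨w, Set.Subset.antisymm (fun u ⟨hs, ht⟩ => hg u hs ht) fun u ⟨c, hc'⟩ => ?_⟩
      refine ⟨⟨a * c, ?_⟩, ⟨b * c, ?_⟩⟩ <;> dsimp only at *
      · rw [← mul_assoc, ha, hc']
      · rw [← mul_assoc, hb, hc']
    · left
      ext u
      simp only [Set.mem_inter_iff, Set.mem_empty_iff_false, iff_false]
      exact fun ⟨hs, ht⟩ => hne ⟨u, hs, ht⟩
end

section
/- Let R be an integral domain. The ax+b semigroup R ⋊ R^× (underlying set R × (R \ {0}), product (b,a)(d,c) = (b + a*d, a*c)) satisfies Clifford's condition if and only if the multiplicative monoid R^× = R \ {0} satisfies Clifford's condition (equivalently, every pair of nonzero elements of R has a least common multiple). -/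
/-- A monoid `T` satisfies Clifford's condition if every intersection of two
principal right ideals is empty or principal. -/
def CliffordCondition (T : Type*) [Monoid T] : Prop :=
  ∀ s t : T, Set.range (s * ·) ∩ Set.range (t * ·) = ∅ ∨
    ∃ r : T, Set.range (s * ·) ∩ Set.range (t * ·) = Set.range (r * ·)

/-- The `ax+b` semigroup over an integral domain `R`: underlying set `R × (R \ {0})`
with product `(b, a)(d, c) = (b + a d, a c)`. -/
structure AxB (R : Type*) [Zero R] where
  b : R
  a : R
  ha : a ≠ 0

variable {R : Type*} [CommRing R] [IsDomain R]

instance : Mul (AxB R) :=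
  ⟨fun x y => ⟨x.b + x.a * y.b, x.a * y.a, mul_ne_zero x.ha y.ha⟩⟩

instance : One (AxB R) := ⟨⟨0, 1, one_ne_zero⟩⟩

lemma AxB.mul_def (x y : AxB R) :
    x * y = ⟨x.b + x.a * y.b, x.a * y.a, mul_ne_zero x.ha y.ha⟩ := rfl

lemma AxB.one_def : (1 : AxB R) = ⟨0, 1, one_ne_zero⟩ := rfl

instance : Monoid (AxB R) where
  mul_assoc x y z := by
    simp only [AxB.mul_def, AxB.mk.injEq]
    constructor <;> ring
  one_mul x := by
    cases x
    simp [AxB.mul_def, AxB.one_def]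
  mul_one x := by
    cases x
    simp [AxB.mul_def, AxB.one_def]

/-- The multiplicative monoid `R^× = R \ {0}` of an integral domain. -/
instance : Monoid {a : R // a ≠ 0} where
  mul x y := ⟨x.1 * y.1, mul_ne_zero x.2 y.2⟩
  one := ⟨1, one_ne_zero⟩
  mul_assoc x y z := Subtype.ext (mul_assoc x.1 y.1 z.1)
  one_mul x := Subtype.ext (one_mul x.1)
  mul_one x := Subtype.ext (mul_one x.1)

lemma AxB.mem_range_iff (x z : AxB R) :
    z ∈ Set.range (x * ·) ↔ (∃ d, z.b = x.b + x.a * d) ∧ ∃ c, c ≠ 0 ∧ z.a = x.a * c := by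
  constructor
  · rintro ⟨w, rfl⟩
    exact ⟨⟨w.b, rfl⟩, w.a, w.ha, rfl⟩
  · rintro ⟨⟨d, hd⟩, c, hc, hca⟩
    refine ⟨⟨d, c, hc⟩, ?_⟩
    cases z
    simp_all [AxB.mul_def]

lemma sub_mem_range_iff (s y : {a : R // a ≠ 0}) :
    y ∈ Set.range (s * ·) ↔ ∃ c, c ≠ 0 ∧ y.1 = s.1 * c := by
  constructor
  · rintro ⟨t, rfl⟩
    exact ⟨t.1, t.2, rfl⟩
  · rintro ⟨c, hc, h⟩
    exact ⟨⟨c, hc⟩, Subtype.ext h.symm⟩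

/-- The `ax+b` semigroup over an integral domain `R` satisfies Clifford's condition
iff the multiplicative monoid `R \ {0}` does (iff every pair of nonzero elements of
`R` has a least common multiple). -/
theorem stmt8 :
    CliffordCondition (AxB R) ↔ CliffordCondition {a : R // a ≠ 0} := by
  constructor
  · intro H s t
    right
    have hne : (⟨0, s.1 * t.1, mul_ne_zero s.2 t.2⟩ : AxB R) ∈
        Set.range ((⟨0, s.1, s.2⟩ : AxB R) * ·) ∩ Set.range ((⟨0, t.1, t.2⟩ : AxB R) * ·) := by
      refine ⟨(AxB.mem_range_iff _ _).2 ⟨⟨0, by ring⟩, t.1, t.2, rfl⟩,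
        (AxB.mem_range_iff _ _).2 ⟨⟨0, by ring⟩, s.1, s.2, by ring⟩⟩
    rcases H ⟨0, s.1, s.2⟩ ⟨0, t.1, t.2⟩ with h | ⟨r, hr⟩
    · rw [h] at hne; exact absurd hne (Set.notMem_empty _)
    refine ⟨⟨r.a, r.ha⟩, ?_⟩
    ext y
    simp only [Set.mem_inter_iff, sub_mem_range_iff]
    constructor
    · rintro ⟨⟨c₁, hc₁, h₁⟩, c₂, hc₂, h₂⟩
      have hz : (⟨s.1 * t.1, y.1, y.2⟩ : AxB R) ∈
          Set.range ((⟨0, s.1, s.2⟩ : AxB R) * ·) ∩ Set.range ((⟨0, t.1, t.2⟩ : AxB R) * ·) := by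
        refine ⟨(AxB.mem_range_iff _ _).2 ⟨⟨t.1, by ring⟩, c₁, hc₁, h₁⟩,
          (AxB.mem_range_iff _ _).2 ⟨⟨s.1, by ring⟩, c₂, hc₂, h₂⟩⟩
      rw [hr, AxB.mem_range_iff] at hz
      exact hz.2
    · rintro ⟨c, hc, hy⟩
      have hz : (⟨r.b, y.1, y.2⟩ : AxB R) ∈
          Set.range ((⟨0, s.1, s.2⟩ : AxB R) * ·) ∩ Set.range ((⟨0, t.1, t.2⟩ : AxB R) * ·) := by
        rw [hr, AxB.mem_range_iff]
        exact ⟨⟨0, by ring⟩, c, hc, hy⟩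
      obtain ⟨h1, h2⟩ := hz
      rw [AxB.mem_range_iff] at h1 h2
      exact ⟨h1.2, h2.2⟩
  · intro h x y
    rcases Set.eq_empty_or_nonempty (Set.range (x * ·) ∩ Set.range (y * ·)) with he | ⟨z, hzx, hzy⟩
    · exact Or.inl he
    right
    rw [AxB.mem_range_iff] at hzx hzy
    obtain ⟨⟨d₁, hd₁⟩, -⟩ := hzx
    obtain ⟨⟨d₂, hd₂⟩, -⟩ := hzy
    have hne : (⟨x.a * y.a, mul_ne_zero x.ha y.ha⟩ : {a : R // a ≠ 0}) ∈
        Set.range ((⟨x.a, x.ha⟩ : {a : R // a ≠ 0}) * ·) ∩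
        Set.range ((⟨y.a, y.ha⟩ : {a : R // a ≠ 0}) * ·) :=
      ⟨(sub_mem_range_iff _ _).2 ⟨y.a, y.ha, rfl⟩,
       (sub_mem_range_iff _ _).2 ⟨x.a, x.ha, by ring⟩⟩
    rcases h ⟨x.a, x.ha⟩ ⟨y.a, y.ha⟩ with hE | ⟨m, hm⟩
    · rw [hE] at hne; exact absurd hne (Set.notMem_empty _)
    have hmm : m ∈ Set.range ((⟨x.a, x.ha⟩ : {a : R // a ≠ 0}) * ·) ∩
        Set.range ((⟨y.a, y.ha⟩ : {a : R // a ≠ 0}) * ·) := by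
      rw [hm]; exact ⟨1, mul_one m⟩
    obtain ⟨hms, hmt⟩ := hmm
    rw [sub_mem_range_iff] at hms hmt
    obtain ⟨u, hu, hmu⟩ := hms
    obtain ⟨v, hv, hmv⟩ := hmt
    refine ⟨⟨z.b, m.1, m.2⟩, ?_⟩
    ext w
    simp only [Set.mem_inter_iff, AxB.mem_range_iff]
    constructor
    · rintro ⟨⟨⟨e₁, he₁⟩, c₁, hc₁, hca₁⟩, ⟨e₂, he₂⟩, c₂, hc₂, hca₂⟩
      constructor
      · by_cases hwz : w.b - z.b = 0
        · exact ⟨0, by rw [mul_zero, add_zero, ← sub_eq_zero.mp hwz]⟩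
        · have h1 : w.b - z.b = x.a * (e₁ - d₁) := by rw [he₁, hd₁]; ring
          have h2 : w.b - z.b = y.a * (e₂ - d₂) := by rw [he₂, hd₂]; ring
          have hmem : (⟨w.b - z.b, hwz⟩ : {a : R // a ≠ 0}) ∈
              Set.range ((⟨x.a, x.ha⟩ : {a : R // a ≠ 0}) * ·) ∩
              Set.range ((⟨y.a, y.ha⟩ : {a : R // a ≠ 0}) * ·) :=
            ⟨(sub_mem_range_iff _ _).2 ⟨e₁ - d₁,
                fun hh => hwz (by rw [h1, hh, mul_zero]), h1⟩,
             (sub_mem_range_iff _ _).2 ⟨e₂ - d₂,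
                fun hh => hwz (by rw [h2, hh, mul_zero]), h2⟩⟩
          rw [hm, sub_mem_range_iff] at hmem
          obtain ⟨c, -, hcc⟩ := hmem
          exact ⟨c, by rw [← hcc]; ring⟩
      · have hmem : (⟨w.a, w.ha⟩ : {a : R // a ≠ 0}) ∈
            Set.range ((⟨x.a, x.ha⟩ : {a : R // a ≠ 0}) * ·) ∩
            Set.range ((⟨y.a, y.ha⟩ : {a : R // a ≠ 0}) * ·) :=
          ⟨(sub_mem_range_iff _ _).2 ⟨c₁, hc₁, hca₁⟩,
           (sub_mem_range_iff _ _).2 ⟨c₂, hc₂, hca₂⟩⟩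
        rw [hm, sub_mem_range_iff] at hmem
        exact hmem
    · rintro ⟨⟨d, hd⟩, c, hc, hca⟩
      refine ⟨⟨⟨d₁ + u * d, ?_⟩, u * c, mul_ne_zero hu hc, ?_⟩,
        ⟨d₂ + v * d, ?_⟩, v * c, mul_ne_zero hv hc, ?_⟩
      · rw [hd, hd₁, hmu]; ring
      · rw [hca, hmu]; ring
      · rw [hd, hd₂, hmv]; ring
      · rw [hca, hmv]; ring
end

section
/- Let S be a subsemigroup of a group G that generates G. Then S is left reversible (sS ∩ tS ≠ ∅ for all s, t ∈ S) if and only if S is a left thick subset of G, i.e. for every finite sequence g₁,…,gₙ ∈ G the intersection g₁S ∩ … ∩ gₙS is nonempty. -/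
/-- A submonoid `S` generating a group `G` is left reversible iff it is left thick
in `G`. -/
theorem stmt18 {G : Type*} [Group G] (S : Submonoid G)
    (hgen : Subgroup.closure (S : Set G) = ⊤) :
    (∀ s t : G, s ∈ S → t ∈ S →
        (((s * ·) '' (S : Set G)) ∩ ((t * ·) '' (S : Set G))).Nonempty) ↔
      (∀ (n : ℕ) (g : Fin n → G), (⋂ i, (g i * ·) '' (S : Set G)).Nonempty) := by
  constructor
  · intro hrev
    have key : ∀ g : G, ∃ s ∈ S, g * s ∈ S := by
      intro g
      have hg : g ∈ Subgroup.closure (S : Set G) := by rw [hgen]; trivial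
      induction hg using Subgroup.closure_induction with
      | mem x hx => exact ⟨1, one_mem S, by simpa using hx⟩
      | one => exact ⟨1, one_mem S, by simpa using one_mem S⟩
      | mul x y hx hy ihx ihy =>
        obtain ⟨s₁, hs₁, hxs₁⟩ := ihx
        obtain ⟨s₂, hs₂, hys₂⟩ := ihy
        obtain ⟨z, ⟨a, ha, hza⟩, ⟨b, hb, hzb⟩⟩ := hrev s₁ (y * s₂) hs₁ hys₂
        refine ⟨s₂ * b, mul_mem hs₂ hb, ?_⟩
        have h : y * s₂ * b = s₁ * a := by
          simp only at hza hzb; rw [hzb, ← hza]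
        have he : x * y * (s₂ * b) = x * s₁ * a := by
          rw [mul_assoc x y, ← mul_assoc y, h, ← mul_assoc]
        rw [he]
        exact mul_mem hxs₁ ha
      | inv x hx ih =>
        obtain ⟨s, hs, hxs⟩ := ih
        exact ⟨x * s, hxs, by simpa using hs⟩
    intro n g
    induction n with
    | zero => exact ⟨1, by simp⟩
    | succ n ih =>
      obtain ⟨x, hx⟩ := ih (g ∘ Fin.succ)
      obtain ⟨s, hs, hgs⟩ := key ((g 0)⁻¹ * x)
      refine ⟨x * s, Set.mem_iInter.2 ?_⟩
      intro i
      rcases Fin.eq_zero_or_eq_succ i with h0 | ⟨j, rfl⟩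
      · subst h0
        exact ⟨(g 0)⁻¹ * x * s, hgs, by group⟩
      · obtain ⟨a, ha, hxa⟩ := Set.mem_iInter.1 hx j
        exact ⟨a * s, mul_mem ha hs, by simp only [Function.comp_apply] at hxa; show g j.succ * (a * s) = x * s; rw [← mul_assoc, hxa]⟩
  · intro hthick s t hs ht
    obtain ⟨x, hx⟩ := hthick 2 ![s, t]
    rw [Set.mem_iInter] at hx
    exact ⟨x, by simpa using hx 0, by simpa using hx 1⟩
end

section
/- Let S be a submonoid of a group G that generates G and is left thick in G, and let H be a group. Then every monoid homomorphism φ : S → H extends uniquely to a group homomorphism φ' : G → H. -/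
/-- A monoid homomorphism from a left thick generating submonoid `S` of a group `G`
into a group `H` extends uniquely to a group homomorphism `G → H`. -/
theorem stmt19 {G H : Type*} [Group G] [Group H] (S : Submonoid G)
    (hgen : Subgroup.closure (S : Set G) = ⊤)
    (hthick : ∀ (n : ℕ) (g : Fin n → G), (⋂ i, (g i * ·) '' (S : Set G)).Nonempty)
    (φ : S →* H) :
    ∃! ψ : G →* H, ∀ s : S, ψ s = φ s := by
  classical
  -- every element of G can be pushed into S by a right multiplication from S
  have hA : ∀ g : G, ∃ u : S, g * u ∈ S := by
    intro g
    obtain ⟨x, hx⟩ := hthick 2 ![g, 1]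
    simp only [Set.mem_iInter] at hx
    obtain ⟨u, hu, hux⟩ := hx 0
    obtain ⟨t, ht, htx⟩ := hx 1
    simp only [Matrix.cons_val_zero, Matrix.cons_val_one, Matrix.head_cons, one_mul] at hux htx
    exact ⟨⟨u, hu⟩, by rw [hux, ← htx]; exact ht⟩
  -- the value φ(g·u)·φ(u)⁻¹ does not depend on the choice of u
  have key : ∀ (g : G) (u v : S) (hu : g * u ∈ S) (hv : g * v ∈ S),
      φ ⟨g * u, hu⟩ * (φ u)⁻¹ = φ ⟨g * v, hv⟩ * (φ v)⁻¹ := by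
    intro g u v hu hv
    obtain ⟨w, hw⟩ := hA ((u : G)⁻¹ * v)
    set x : S := ⟨(u : G)⁻¹ * (v : G) * w, hw⟩ with hxdef
    have hux : (u : G) * x = (v : G) * w := by
      simp only [hxdef]; group
    have h1 : φ u * φ x = φ v * φ w := by
      rw [← map_mul, ← map_mul]; congr 1; exact Subtype.ext hux
    have h2 : φ ⟨g * u, hu⟩ * φ x = φ ⟨g * v, hv⟩ * φ w := by
      rw [← map_mul, ← map_mul]; congr 1
      apply Subtype.ext
      show (g * u) * x = (g * v) * w
      rw [mul_assoc, hux, mul_assoc]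
    calc φ ⟨g * u, hu⟩ * (φ u)⁻¹
        = (φ ⟨g * u, hu⟩ * φ x) * (φ u * φ x)⁻¹ := by group
      _ = (φ ⟨g * v, hv⟩ * φ w) * (φ v * φ w)⁻¹ := by rw [h1, h2]
      _ = φ ⟨g * v, hv⟩ * (φ v)⁻¹ := by group
  -- the extension as a function
  let f : G → H := fun g => φ ⟨g * (hA g).choose, (hA g).choose_spec⟩ * (φ (hA g).choose)⁻¹
  have fdef : ∀ (g : G) (u : S) (hu : g * u ∈ S), f g = φ ⟨g * u, hu⟩ * (φ u)⁻¹ := by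
    intro g u hu
    exact key g (hA g).choose u (hA g).choose_spec hu
  have fS : ∀ s : S, f (s : G) = φ s := by
    intro s
    have h1 : (s : G) * ((1 : S) : G) ∈ S := by simp
    rw [fdef (s : G) 1 h1]
    have : φ ⟨(s : G) * ((1 : S) : G), h1⟩ = φ s := by congr 1; exact Subtype.ext (by simp)
    rw [this, map_one]; group
  have fmul : ∀ g h : G, f (g * h) = f g * f h := by
    intro g h
    obtain ⟨u, hu⟩ := hA h
    set p : S := ⟨h * u, hu⟩ with hpdef
    obtain ⟨w, hw⟩ := hA (g * (h * u))
    have hgpw : g * ((p * w : S) : G) ∈ S := by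
      have : g * ((p * w : S) : G) = g * (h * u) * w := by
        simp only [Submonoid.coe_mul, hpdef]; group
      rw [this]; exact hw
    have hhuw : h * ((u * w : S) : G) ∈ S := by
      have : h * ((u * w : S) : G) = ((p * w : S) : G) := by
        simp only [Submonoid.coe_mul, hpdef]; group
      rw [this]; exact (p * w).2
    have hghuw : (g * h) * ((u * w : S) : G) ∈ S := by
      have : (g * h) * ((u * w : S) : G) = g * ((p * w : S) : G) := by
        simp only [Submonoid.coe_mul, hpdef]; group
      rw [this]; exact hgpw
    rw [fdef (g * h) (u * w) hghuw, fdef g (p * w) hgpw, fdef h (u * w) hhuw]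
    have e1 : φ ⟨(g * h) * ((u * w : S) : G), hghuw⟩ = φ ⟨g * ((p * w : S) : G), hgpw⟩ := by
      congr 1; apply Subtype.ext; simp only [Submonoid.coe_mul, hpdef]; group
    have e2 : φ ⟨h * ((u * w : S) : G), hhuw⟩ = φ (p * w) := by
      congr 1; apply Subtype.ext; simp only [Submonoid.coe_mul, hpdef]; group
    rw [e1, e2]
    group
  let ψ : G →* H := MonoidHom.mk' f fmul
  refine ⟨ψ, fS, ?_⟩
  intro ψ' hψ'
  ext g
  have hg : g ∈ Subgroup.closure (S : Set G) := hgen ▸ Subgroup.mem_top g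
  induction hg using Subgroup.closure_induction with
  | mem x hx =>
      have h1 := hψ' ⟨x, hx⟩
      have h2 := fS ⟨x, hx⟩
      exact h1.trans h2.symm
  | one => simp
  | mul x y _ _ hx hy => simp [map_mul, hx, hy]
  | inv x _ hx => simp [map_inv, hx]
end
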